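/- Let π be a k-colored permutation of length n, let P(π) be its insertion tableau, and draw the shadow lines L_1, L_2, ... of the square diagram of π. Then: (1) the row numbers of the X's lying on L_i are exactly the numbers filling the k-ribbons of the i-th column (from the left) of P(π); (2) if L_i passes through a single X^j, then the i-th column of P(π) consists of a single k-ribbon of height j; (3) if L_i passes through two X's, say X^j in the higher row and X^l in the lower row, then the i-th column of P(π) has height 2 and the smaller of the two row numbers fills a k-ribbon of height l stacked on top of a k-ribbon of height k+1−l filled with the larger row number. -/

import Mathlib

namespace KRF

/-- A letter of the alphabet `{1_1, …, 1_k, 2}`:  `one j` stands for the letter `1_j`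
(with `1 ≤ j ≤ k` for genuine letters), and `two` stands for the letter `2`. -/
inductive Letter (k : ℕ) : Type where
  | one : ℕ → Letter k
  | two : Letter k
deriving DecidableEq

/-- A word over the alphabet `{1_1, …, 1_k, 2}`, listed from the leftmost letter to the
rightmost letter. -/
abbrev Word (k : ℕ) := List (Letter k)

/-- The contribution of a letter to the rank: each `1_j` counts `1` and each `2` counts `2`. -/
def Letter.rank {k : ℕ} : Letter k → ℕ
  | .one _ => 1
  | .two => 2

/-- The rank of a word: the sum of its letters. -/
def Word.rank {k : ℕ} (w : Word k) : ℕ := (w.map Letter.rank).sum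

/-- The letter `1_j` is valid when `1 ≤ j ≤ k`. -/
def Letter.Valid (k : ℕ) : Letter k → Prop
  | .one j => 1 ≤ j ∧ j ≤ k
  | .two => True

/-- A genuine word of the Fibonacci poset `Z(k)`: all of its letters are valid. -/
def Word.Valid (k : ℕ) (w : Word k) : Prop := ∀ l ∈ w, l.Valid k

/-- The cover relation of the Fibonacci poset `Z(k)`:  `z` is covered by `w` iff `z` is
obtained from `w` either by changing a `2` into some `1_j` when all letters to the left of
that `2` are `2`'s, or by deleting the leftmost letter of the form `1_j`. -/
def ZCovers (k : ℕ) (z w : Word k) : Prop :=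
  (∃ (p s : Word k) (j : ℕ), (∀ l ∈ p, l = Letter.two) ∧ 1 ≤ j ∧ j ≤ k ∧
      w = p ++ Letter.two :: s ∧ z = p ++ Letter.one j :: s) ∨
  (∃ (p s : Word k) (j : ℕ), (∀ l ∈ p, l = Letter.two) ∧ 1 ≤ j ∧ j ≤ k ∧
      w = p ++ Letter.one j :: s ∧ z = p ++ s)

/-- `c 0 ⋖ c 1 ⋖ ⋯ ⋖ c n` is a saturated chain in `Z(k)` starting at the empty word. -/
def IsZChain (k n : ℕ) (c : ℕ → Word k) : Prop :=
  c 0 = [] ∧ ∀ i, i < n → ZCovers k (c i) (c (i + 1))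

end KRF
namespace KRF

/-- A column of a (tiled and filled) `k`-ribbon Fibonacci tableau.
`single h v` is a column of height 1 (shape letter `1_h`) tiled by one `k`-ribbon of
height `h` filled with the value `v`.
`double ht hb vt vb` is a column of height 2 (shape letter `2`) tiled by a `k`-ribbon of
height `ht` filled with `vt` stacked on top of a `k`-ribbon of height `hb` (always
`hb = k + 1 - ht` for genuine tableaux) filled with `vb`. -/
inductive Col (k : ℕ) : Type where
  | single : ℕ → ℕ → Col k
  | double : ℕ → ℕ → ℕ → ℕ → Col k
deriving DecidableEq

/-- A (tiled, filled) `k`-ribbon Fibonacci tableau: its list of columns, from the leftmost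
column to the rightmost one. -/
abbrev Tab (k : ℕ) := List (Col k)

/-- The shape letter of a column. -/
def Col.shape {k : ℕ} : Col k → Letter k
  | .single h _ => Letter.one h
  | .double _ _ _ _ => Letter.two

/-- The `k`-ribbon Fibonacci shape (a word) underlying a tableau. -/
def Tab.shape {k : ℕ} (T : Tab k) : Word k := T.map Col.shape

/-- The value in the bottom `k`-ribbon of a column. -/
def Col.bottomVal {k : ℕ} : Col k → ℕ
  | .single _ v => v
  | .double _ _ _ vb => vb

/-- The heights occurring in a column are genuine ribbon heights: between `1` and `k`,
and in a column of height 2 the two heights sum to `k + 1`. -/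
def Col.HeightsValid (k : ℕ) : Col k → Prop
  | .single h _ => 1 ≤ h ∧ h ≤ k
  | .double ht hb _ _ => 1 ≤ ht ∧ ht ≤ k ∧ hb = k + 1 - ht

/-- The list of all entries of a tableau (one for each `k`-ribbon). -/
def Tab.entries {k : ℕ} (T : Tab k) : List ℕ :=
  (T.map fun c => match c with
    | Col.single _ v => [v]
    | Col.double _ _ vt vb => [vt, vb]).flatten

/-- The list of the bottom-ribbon values of the columns of a tableau. -/
def Tab.bottoms {k : ℕ} (T : Tab k) : List ℕ := T.map Col.bottomVal

/-- `T` is a standard `k`-ribbon Fibonacci tableau with entries `1, …, n`: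
heights are valid, the entries are exactly `1, …, n`,  and the tableau can be built by
placing `n, n-1, …, 1` in order, each new `k`-ribbon being either appended (as a new
rightmost height-1 column) to the shape formed by the `k`-ribbons containing larger
entries, or stacked on top of a single such `k`-ribbon.  Equivalently (and this is how we
formalize it): the bottom entries strictly decrease from left to right (in particular the
`k`-ribbon containing the leftmost square of the bottom row contains `n`), and in each
column of height 2 the top entry is smaller than the bottom entry. -/
def IsStandardTab (k n : ℕ) (T : Tab k) : Prop :=
  (∀ c ∈ T, Col.HeightsValid k c) ∧
  (Tab.entries T).Perm (List.range' 1 n) ∧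
  List.Chain' (fun a b => b < a) (Tab.bottoms T) ∧
  (∀ c ∈ T, ∀ ht hb vt vb, c = Col.double ht hb vt vb → vt < vb)

/-- Updating a (partial) path tableau along one cover step `z ⋖ w` of `Z(k)`, placing the
value `i` in the `k` new squares of `w` relative to `z`:  if `w` is obtained from `z` by
inserting a letter `1_j` after the prefix of `2`'s, a new height-1 column with a single
ribbon of height `j` filled with `i` is created there; if `w` is obtained from `z` by
changing the letter `1_h` just after the prefix of `2`'s into a `2`, the `k` new squares
of that column form a `k`-ribbon of height `k + 1 - h` filled with `i`, stacked on top of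
the already present `k`-ribbon of height `h`. -/
def updateTab (k : ℕ) (i : ℕ) : Word k → Word k → Tab k → Tab k
  | Letter.two :: z', Letter.two :: w', c :: T => c :: updateTab k i z' w' T
  | Letter.one h :: _, Letter.two :: _, Col.single _ v :: T =>
      Col.double (k + 1 - h) h i v :: T
  | z, Letter.one j :: w', T => if z = w' then Col.single j i :: T else T
  | _, _, T => T

/-- The `k`-ribbon Fibonacci path tableau determined by a saturated chain in `Z(k)`:
for each `i = 1, …, n` the value `i` is placed in the `k` new squares of `c i` relative
to `c (i-1)`. -/
def chainTab (k : ℕ) (c : ℕ → Word k) : ℕ → Tab k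
  | 0 => []
  | m + 1 => updateTab k (m + 1) (c m) (c (m + 1)) (chainTab k c m)

/-- `T` is a `k`-ribbon Fibonacci path tableau with entries `1, …, n`: it is obtained
from some saturated chain `∅ = c 0 ⋖ c 1 ⋖ ⋯ ⋖ c n` in `Z(k)` by placing `i`'s in the
`k` new squares created at the `i`-th step. -/
def IsPathTab (k n : ℕ) (T : Tab k) : Prop :=
  ∃ c : ℕ → Word k, IsZChain k n c ∧ T = chainTab k c n

end KRF
namespace KRF

/-- A `k`-colored permutation of length `n`: a permutation `x_1 x_2 ⋯ x_n` of `{1, …, n}`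
(here `x_i = perm i + 1`, using `Fin n` positions and values) together with a color
`color i ∈ {1, …, k}` attached to each entry. -/
structure ColoredPerm (n k : ℕ) : Type where
  perm : Equiv.Perm (Fin n)
  color : Fin n → ℕ
  color_pos : ∀ i, 1 ≤ color i
  color_le : ∀ i, color i ≤ k

/-- Insertion of a value `x` of color `j` into a `k`-ribbon Fibonacci tableau: compare `x`
with the value `t` in the `k`-ribbon containing the leftmost square of the bottom row.
If the tableau is empty or `x > t`, a new leftmost height-1 column consisting of a single
`k`-ribbon of height `j` filled with `x` is created.  If `x < t`, a `k`-ribbon of height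
`j` filled with `x` is placed on top of the `k`-ribbon containing `t` (which is forced to
become a `k`-ribbon of height `k + 1 - j`); if a `k`-ribbon of height `l` filled with `b`
was already on top of the ribbon containing `t`, it is bumped out and the value `b` with
color `l` is inserted recursively into the tableau formed by the columns to the right. -/
def insertVal (k : ℕ) (x j : ℕ) : Tab k → Tab k
  | [] => [Col.single j x]
  | c :: rest =>
    if Col.bottomVal c < x then Col.single j x :: c :: rest
    else
      match c with
      | Col.single _ v => Col.double j (k + 1 - j) x v :: rest
      | Col.double ht _ vt vb => Col.double j (k + 1 - j) x vb :: insertVal k vt ht rest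

/-- The insertion tableau obtained after inserting the first `i` colored entries
`x_1^{j_1}, …, x_i^{j_i}` of the `k`-colored permutation `π` into the empty tableau. -/
def PPartial (k n : ℕ) (π : ColoredPerm n k) (i : ℕ) : Tab k :=
  ((List.finRange n).take i).foldl
    (fun T m => insertVal k ((π.perm m : ℕ) + 1) (π.color m) T) []

/-- The insertion tableau `P(π)` of a `k`-colored permutation. -/
def PTab (k n : ℕ) (π : ColoredPerm n k) : Tab k := PPartial k n π n

/-- The chain of shapes of the partial insertion tableaux of `π`. -/
def QChain (k n : ℕ) (π : ColoredPerm n k) (i : ℕ) : Word k :=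
  Tab.shape (PPartial k n π i)

/-- The recording tableau `Q(π)`: it has the same shape as `P(π)`, and after the `i`-th
insertion the value `i` is placed in the `k` squares by which the shape grew at step `i`. -/
def QTab (k n : ℕ) (π : ColoredPerm n k) : Tab k := chainTab k (QChain k n π) n

end KRF
namespace KRF

/-- The recursive construction of the shadow lines of a square diagram, applied to the set
`S` of the positions of the `X`'s not lying on a previously drawn line.  Each line is
recorded as the pair `(i₁, i₂)` where `i₁` is the position (column) of the highest
remaining `X` and `i₂` is the rightmost remaining column containing an `X`; the line
passes through these one or two `X`'s, which are then removed. -/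
def shadowAux (n : ℕ) (p : Equiv.Perm (Fin n)) (S : Finset (Fin n)) :
    List (Fin n × Fin n) :=
  if h : S.Nonempty then
    (p.symm ((S.image p).max' (h.image p)), S.max' h) ::
      shadowAux n p ((S.erase (p.symm ((S.image p).max' (h.image p)))).erase (S.max' h))
  else []
termination_by S.card
decreasing_by
  have h1 : p.symm ((S.image p).max' (h.image p)) ∈ S := by
    obtain ⟨a, ha, hpa⟩ := Finset.mem_image.mp (Finset.max'_mem (S.image p) (h.image p))
    simpa [← hpa] using ha
  calc ((S.erase (p.symm ((S.image p).max' (h.image p)))).erase (S.max' h)).card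
      ≤ (S.erase (p.symm ((S.image p).max' (h.image p)))).card := Finset.card_erase_le
    _ < S.card := Finset.card_erase_lt_of_mem h1

/-- The list of shadow lines `L₁, L₂, …` of the square diagram of the `k`-colored
permutation `π`.  The `s`-th entry is the pair `(i₁, i₂)` of positions of the `X`'s
through which `L_s` passes: `i₁` is the column of the highest `X` on the line and `i₂` is
the rightmost column of an `X` on the line (the line passes through a single `X` exactly
when `i₁ = i₂`; when `i₁ ≠ i₂` the `X` in column `i₁` is the leftmost, higher one). -/
def shadowLines {n k : ℕ} (π : ColoredPerm n k) : List (Fin n × Fin n) :=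
  shadowAux n π.perm Finset.univ

end KRF
namespace KRF


section Aux

/-- Auxiliary: insertion as a fold step over (value, color) pairs. -/
def insF (k : ℕ) (T : Tab k) (q : ℕ × ℕ) : Tab k := insertVal k q.1 q.2 T

lemma entries_cons (k : ℕ) (c : Col k) (T : Tab k) :
    Tab.entries (c :: T) = (match c with
      | Col.single _ v => [v]
      | Col.double _ _ vt vb => [vt, vb]) ++ Tab.entries T := by
  simp [Tab.entries]

lemma bottomVal_mem_entries (k : ℕ) (c : Col k) (T : Tab k) :
    Col.bottomVal c ∈ Tab.entries (c :: T) := by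
  cases c <;> simp [entries_cons, Col.bottomVal]

lemma mem_entries_insertVal (k : ℕ) (T : Tab k) : ∀ (x j v : ℕ),
    v ∈ Tab.entries (insertVal k x j T) → v = x ∨ v ∈ Tab.entries T := by
  induction T with
  | nil => intro x j v h; simp [insertVal, Tab.entries] at h; exact Or.inl h
  | cons c rest ih =>
    intro x j v h
    rw [insertVal.eq_def] at h
    simp only [] at h
    split at h
    · rw [entries_cons] at h
      simp at h
      tauto
    · cases c with
      | single hh vv =>
        simp only [entries_cons] at h ⊢
        simp at h ⊢
        tauto
      | double ht hb vt vb =>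
        simp only [entries_cons] at h ⊢
        simp at h ⊢
        rcases h with h | h | h
        · tauto
        · tauto
        · rcases ih vt ht v h with h' | h' <;> tauto

lemma mem_entries_foldl (k : ℕ) (A : List (ℕ × ℕ)) : ∀ (T : Tab k) (v : ℕ),
    v ∈ Tab.entries (A.foldl (insF k) T) → v ∈ Tab.entries T ∨ ∃ q ∈ A, v = q.1 := by
  induction A with
  | nil => intro T v h; exact Or.inl h
  | cons q A ih =>
    intro T v h
    rw [List.foldl_cons] at h
    rcases ih _ v h with h' | h'
    · rcases mem_entries_insertVal k T q.1 q.2 v h' with h'' | h''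
      · exact Or.inr ⟨q, by simp, h''⟩
      · exact Or.inl h''
    · rcases h' with ⟨q', hq', hv⟩
      exact Or.inr ⟨q', by simp [hq'], hv⟩

lemma insF_gt (k : ℕ) (T : Tab k) (x c : ℕ)
    (h : ∀ v ∈ Tab.entries T, v < x) : insF k T (x, c) = Col.single c x :: T := by
  cases T with
  | nil => rfl
  | cons c₁ R =>
    have hb := h _ (bottomVal_mem_entries k c₁ R)
    show insertVal k x c (c₁ :: R) = _
    rw [insertVal.eq_def]
    simp only [if_pos hb]

lemma insF_lt_double (k : ℕ) (d h y x q1 q2 : ℕ) (R : Tab k) (hlt : q1 < x) :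
    insF k (Col.double d h y x :: R) (q1, q2) =
      Col.double q2 (k + 1 - q2) q1 x :: insertVal k y d R := by
  show insertVal k q1 q2 _ = _
  rw [insertVal.eq_def]
  simp only [Col.bottomVal]
  exact if_neg (Nat.not_lt.2 hlt.le)

lemma insF_lt_single (k : ℕ) (c x q1 q2 : ℕ) (R : Tab k) (hlt : q1 < x) :
    insF k (Col.single c x :: R) (q1, q2) =
      Col.double q2 (k + 1 - q2) q1 x :: R := by
  show insertVal k q1 q2 _ = _
  rw [insertVal.eq_def]
  simp only [Col.bottomVal]
  exact if_neg (Nat.not_lt.2 hlt.le)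

lemma foldl_double (k : ℕ) (M : List (ℕ × ℕ)) : ∀ (x y₀ d₀ yl dl : ℕ) (R : Tab k),
    (∀ q ∈ M, q.1 < x) → yl < x →
    (M ++ [(yl, dl)]).foldl (insF k) (Col.double d₀ (k + 1 - d₀) y₀ x :: R) =
      Col.double dl (k + 1 - dl) yl x :: ((y₀, d₀) :: M).foldl (insF k) R := by
  induction M with
  | nil =>
    intro x y₀ d₀ yl dl R _ hl
    simp only [List.nil_append, List.foldl_cons, List.foldl_nil]
    rw [insF_lt_double k _ _ _ _ _ _ R hl]
    rfl
  | cons q M ih =>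
    intro x y₀ d₀ yl dl R hM hl
    simp only [List.cons_append, List.foldl_cons]
    rw [insF_lt_double k _ _ _ _ q.1 q.2 R (hM q (by simp))]
    rw [ih x q.1 q.2 yl dl _ (fun q' hq' => hM q' (by simp [hq'])) hl]
    rfl

lemma foldl_single (k : ℕ) (B₀ : List (ℕ × ℕ)) (x c yl dl : ℕ) (R : Tab k)
    (hB : ∀ q ∈ B₀, q.1 < x) (hl : yl < x) :
    (B₀ ++ [(yl, dl)]).foldl (insF k) (Col.single c x :: R) =
      Col.double dl (k + 1 - dl) yl x :: B₀.foldl (insF k) R := by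
  cases B₀ with
  | nil =>
    simp only [List.nil_append, List.foldl_cons, List.foldl_nil]
    rw [insF_lt_single k c x yl dl R hl]
  | cons q M =>
    simp only [List.cons_append, List.foldl_cons]
    rw [insF_lt_single k c x q.1 q.2 R (hB q (by simp))]
    rw [foldl_double k M x q.1 q.2 yl dl R (fun q' hq' => hB q' (by simp [hq'])) hl]
    rfl

lemma sort_erase_eq {n : ℕ} (S : Finset (Fin n)) (a : Fin n) :
    (S.sort (· ≤ ·)).erase a = (S.erase a).sort (· ≤ ·) := by
  refine List.Perm.eq_of_pairwise' (r := (· ≤ · : Fin n → Fin n → Prop)) ?_ ?_ ?_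
  · exact (S.pairwise_sort _).sublist (List.erase_sublist)
  · exact Finset.pairwise_sort _ _
  · rw [← Multiset.coe_eq_coe, ← Multiset.coe_erase, Finset.sort_eq, Finset.sort_eq,
      Finset.erase_val]

lemma sort_max_split {n : ℕ} (S : Finset (Fin n)) (h : S.Nonempty) :
    S.sort (· ≤ ·) = (S.erase (S.max' h)).sort (· ≤ ·) ++ [S.max' h] := by
  refine List.Perm.eq_of_pairwise' (r := (· ≤ · : Fin n → Fin n → Prop)) ?_ ?_ ?_
  · exact Finset.pairwise_sort _ _
  · rw [List.pairwise_append]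
    refine ⟨Finset.pairwise_sort _ _, List.pairwise_singleton _ _, ?_⟩
    intro a ha b hb
    rw [List.mem_singleton] at hb
    subst hb
    exact S.le_max' a (Finset.mem_of_mem_erase (Finset.mem_sort (α := Fin n) (· ≤ ·) |>.1 ha))
  · rw [← Multiset.coe_eq_coe]
    have hm : S.max' h ∈ S.1 := by rw [Finset.mem_val]; exact S.max'_mem h
    rw [← Multiset.coe_add, Finset.sort_eq, Finset.sort_eq, Finset.erase_val]
    rw [add_comm, Multiset.coe_singleton, Multiset.singleton_add, Multiset.cons_erase hm]
  

lemma shadowAux_cons (n : ℕ) (p : Equiv.Perm (Fin n)) (S : Finset (Fin n))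
    (h : S.Nonempty) :
    shadowAux n p S = (p.symm ((S.image p).max' (h.image p)), S.max' h) ::
      shadowAux n p ((S.erase (p.symm ((S.image p).max' (h.image p)))).erase (S.max' h)) := by
  rw [shadowAux]
  rw [dif_pos h]

lemma main_lemma (k n : ℕ) (p : Equiv.Perm (Fin n)) (col : Fin n → ℕ) (S : Finset (Fin n)) :
    ((S.sort (· ≤ ·)).map (fun i => ((p i : ℕ) + 1, col i))).foldl (insF k) [] =
      (shadowAux n p S).map (fun q : Fin n × Fin n =>
        if q.1 = q.2 then Col.single (col q.1) ((p q.1 : ℕ) + 1)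
        else Col.double (col q.2) (k + 1 - col q.2) ((p q.2 : ℕ) + 1) ((p q.1 : ℕ) + 1)) := by
  induction S using Finset.strongInduction with
  | _ S ih =>
  by_cases h : S.Nonempty
  · rw [shadowAux_cons n p S h, List.map_cons]
    set m₂ := S.max' h with hm₂def
    set m₁ := p.symm ((S.image p).max' (h.image p)) with hm₁def
    have hm₁S : m₁ ∈ S := by
      rw [hm₁def]
      obtain ⟨a, ha, hpa⟩ := Finset.mem_image.mp (Finset.max'_mem (S.image p) (h.image p))
      simpa [← hpa] using ha
    have hm₂S : m₂ ∈ S := S.max'_mem h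
    have hpm₁ : p m₁ = (S.image p).max' (h.image p) := p.apply_symm_apply _
    have hmax : ∀ i ∈ S, i ≠ m₁ → (p i : ℕ) + 1 < (p m₁ : ℕ) + 1 := by
      intro i hi hne
      have hle : p i ≤ p m₁ := by
        rw [hpm₁]; exact Finset.le_max' _ _ (Finset.mem_image_of_mem p hi)
      have hne' : p i ≠ p m₁ := by
        intro hcontra
        exact hne (p.injective hcontra)
      have hlt : p i < p m₁ := lt_of_le_of_ne hle hne'
      have : (p i : ℕ) < (p m₁ : ℕ) := hlt
      omega
    have hsplit := sort_max_split S h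
    by_cases hcase : m₁ = m₂
    · have herase : S.sort (· ≤ ·) = (S.erase m₁).sort (· ≤ ·) ++ [m₁] := by
        rw [hcase]; exact hsplit
      rw [herase, List.map_append, List.foldl_append]
      simp only [List.map_cons, List.map_nil, List.foldl_cons, List.foldl_nil]
      rw [insF_gt]
      · congr 1
        · simp [hcase]
        · rw [← hcase, Finset.erase_idem]
          exact ih (S.erase m₁) (Finset.erase_ssubset hm₁S)
      · intro v hv
        rcases mem_entries_foldl k _ [] v hv with h' | h'
        · simp [Tab.entries] at h'
        · obtain ⟨q, hq, rfl⟩ := h'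
          obtain ⟨a, ha, rfl⟩ := List.mem_map.1 hq
          have haS : a ∈ S.erase m₁ := (Finset.mem_sort _).1 ha
          exact hmax a (Finset.mem_of_mem_erase haS) (Finset.ne_of_mem_erase haS)
    · have hm₁e : m₁ ∈ S.erase m₂ := Finset.mem_erase.2 ⟨hcase, hm₁S⟩
      have hm₁sort : m₁ ∈ (S.erase m₂).sort (· ≤ ·) := (Finset.mem_sort _).2 hm₁e
      obtain ⟨A', B₀, hAB⟩ := List.append_of_mem hm₁sort
      have hnd : ((S.erase m₂).sort (· ≤ ·)).Nodup := Finset.sort_nodup _ _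
      rw [hAB] at hnd
      obtain ⟨hndA, hndB, hdisj⟩ := List.nodup_append.1 hnd
      have hm₁A : m₁ ∉ A' := fun hmem => hdisj _ hmem _ List.mem_cons_self rfl
      have hm₁B : m₁ ∉ B₀ := (List.nodup_cons.1 hndB).1
      have hAmem : ∀ a ∈ A', a ∈ S ∧ a ≠ m₁ := by
        intro a haA
        have : a ∈ (S.erase m₂).sort (· ≤ ·) := by rw [hAB]; simp [haA]
        have haS := (Finset.mem_sort _).1 this
        exact ⟨Finset.mem_of_mem_erase haS, fun hh => hm₁A (hh ▸ haA)⟩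
      have hBmem : ∀ a ∈ B₀, a ∈ S ∧ a ≠ m₁ := by
        intro a haB
        have : a ∈ (S.erase m₂).sort (· ≤ ·) := by rw [hAB]; simp [haB]
        have haS := (Finset.mem_sort _).1 this
        exact ⟨Finset.mem_of_mem_erase haS, fun hh => hm₁B (hh ▸ haB)⟩
      have hsort2 : S.sort (· ≤ ·) = A' ++ m₁ :: (B₀ ++ [m₂]) := by
        rw [hsplit, hAB]; simp [hm₂def]
      rw [hsort2, List.map_append, List.map_cons, List.foldl_append, List.foldl_cons]
      rw [insF_gt]
      · rw [List.map_append, List.map_singleton]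
        rw [foldl_single k _ _ _ _ _ _
          (by rintro q hq
              obtain ⟨a, haB, rfl⟩ := List.mem_map.1 hq
              exact hmax a (hBmem a haB).1 (hBmem a haB).2)
          (hmax m₂ hm₂S (fun hh => hcase hh.symm))]
        congr 1
        · simp [hcase]
        · rw [← List.foldl_append, ← List.map_append]
          have hAB' : A' ++ B₀ = ((S.erase m₁).erase m₂).sort (· ≤ ·) := by
            have e1 : (A' ++ m₁ :: B₀).erase m₁ = A' ++ B₀ := by
              rw [List.erase_append_right _ hm₁A, List.erase_cons_head]
            have ecomm : (S.erase m₂).erase m₁ = (S.erase m₁).erase m₂ := by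
              ext x; simp only [Finset.mem_erase]; tauto
            rw [← e1, ← hAB, sort_erase_eq, ecomm]
          rw [hAB']
          refine ih _ ?_
          exact lt_of_le_of_lt (Finset.erase_subset _ _) (Finset.erase_ssubset hm₁S)
      · intro v hv
        rcases mem_entries_foldl k _ [] v hv with h' | h'
        · simp [Tab.entries] at h'
        · obtain ⟨q, hq, rfl⟩ := h'
          obtain ⟨a, ha, rfl⟩ := List.mem_map.1 hq
          exact hmax a (hAmem a ha).1 (hAmem a ha).2
  · rw [Finset.not_nonempty_iff_eq_empty] at h
    subst h
    rw [shadowAux]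
    simp

end Aux

/-- The shadow lines `L₁, L₂, …` of the square diagram of a `k`-colored
permutation `π` determine the insertion tableau `P(π)`:  (1) the row numbers of the `X`'s
lying on `L_i` are exactly the entries of the `k`-ribbons of the `i`-th column (from the
left) of `P(π)`; (2) if `L_i` passes through a single `X^j`, the `i`-th column of `P(π)`
consists of a single `k`-ribbon of height `j` (filled with that row number); (3) if `L_i`
passes through two `X`'s, say `X^j` in the higher row and `X^l` in the lower row, then the
`i`-th column has height 2 and the smaller row number fills a `k`-ribbon of height `l`
stacked on top of a `k`-ribbon of height `k + 1 − l` filled with the larger row number. -/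
theorem shadowLines_determine_PTab (k n : ℕ) (hk : 1 ≤ k) (π : ColoredPerm n k) :
    (PTab k n π).length = (shadowLines π).length ∧
    ∀ (i : ℕ) (i₁ i₂ : Fin n), (shadowLines π)[i]? = some (i₁, i₂) →
      (i₁ = i₂ →
        (PTab k n π)[i]? = some (Col.single (π.color i₁) ((π.perm i₁ : ℕ) + 1))) ∧
      (i₁ ≠ i₂ →
        (PTab k n π)[i]? = some (Col.double (π.color i₂) (k + 1 - π.color i₂)
          ((π.perm i₂ : ℕ) + 1) ((π.perm i₁ : ℕ) + 1))) := by
  have key : PTab k n π = (shadowLines π).map (fun q : Fin n × Fin n =>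
      if q.1 = q.2 then Col.single (π.color q.1) ((π.perm q.1 : ℕ) + 1)
      else Col.double (π.color q.2) (k + 1 - π.color q.2)
        ((π.perm q.2 : ℕ) + 1) ((π.perm q.1 : ℕ) + 1)) := by
    have H := main_lemma k n π.perm π.color Finset.univ
    rw [Fin.sort_univ, List.foldl_map] at H
    show PPartial k n π n = _
    unfold PPartial
    rw [List.take_of_length_le (le_of_eq (List.length_finRange (n := n)))]
    exact H
  constructor
  · rw [key, List.length_map]
  · intro i i₁ i₂ hi
    refine ⟨fun he => ?_, fun hne => ?_⟩
    · rw [key, List.getElem?_map, hi, Option.map_some]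
      simp [he]
    · rw [key, List.getElem?_map, hi, Option.map_some]
      simp [hne]

end KRF
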